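/- For every t ∈ (0,1], the quantities s_1 = (1/(t+L_0(t)))·∑_{i=1}^{N−1} L_i(t) and s_2 = (1/(t+L_0(t)))·∑_{i=1}^{N−1} ((N−i)/N)·L_i(t) satisfy 0 ≤ s_2 ≤ s_1 < 1, and the successful transmission probability satisfies the two-sided bound (t/(t+L_0(t)))·(1/(1 − s_2)) ≤ P_c(t) ≤ (t/(t+L_0(t)))·(1/(1 − s_1)). (This is property 1 of the paper's Lemma 3: P_c(t) is sandwiched between two fractional functions of t.) -/

import Mathlib

open MeasureTheory Finset

/-- `L_0(t) = 2t·∫_1^∞ τu/(u^β+τ) du + 2(1−t)·∫_0^∞ τu/(u^β+τ) du`. -/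
noncomputable def L0 (β τ t : ℝ) : ℝ :=
  2 * t * (∫ u in Set.Ioi (1 : ℝ), τ * u / (u ^ β + τ)) +
    2 * (1 - t) * (∫ u in Set.Ioi (0 : ℝ), τ * u / (u ^ β + τ))

/-- `L_i(t) = 2t·∫_1^∞ τ^i u^{β+1}/(u^β+τ)^{i+1} du + 2(1−t)·∫_0^∞ τ^i u^{β+1}/(u^β+τ)^{i+1} du`
for integers `i ≥ 1`. -/
noncomputable def Li (β τ : ℝ) (i : ℕ) (t : ℝ) : ℝ :=
  2 * t * (∫ u in Set.Ioi (1 : ℝ), τ ^ i * u ^ (β + 1) / (u ^ β + τ) ^ (i + 1)) +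
    2 * (1 - t) * (∫ u in Set.Ioi (0 : ℝ), τ ^ i * u ^ (β + 1) / (u ^ β + τ) ^ (i + 1))

/-- The strictly lower-triangular Toeplitz matrix `D(t)` with `(D(t))_{jk} = L_{j−k}(t)` for
`j > k` and `0` otherwise. -/
noncomputable def Dmat (β τ : ℝ) (N : ℕ) (t : ℝ) : Matrix (Fin N) (Fin N) ℝ :=
  fun j k => if (k : ℕ) < (j : ℕ) then Li β τ ((j : ℕ) - (k : ℕ)) t else 0

/-- The induced `ℓ1` matrix norm `‖M‖₁ = max_{1≤j≤N} ∑_{i=1}^N |M_{ij}|`. -/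
noncomputable def matNorm1 {N : ℕ} (M : Matrix (Fin N) (Fin N) ℝ) : ℝ :=
  ⨆ j : Fin N, ∑ i : Fin N, |M i j|

/-- The successful transmission probability of a cached file stored with caching probability `t`:
`P_c(t) = (t/(t+L_0(t)))·‖(I − (1/(t+L_0(t)))·D(t))^{−1}‖₁`. -/
noncomputable def Pc (β τ : ℝ) (N : ℕ) (t : ℝ) : ℝ :=
  (t / (t + L0 β τ t)) *
    matNorm1 ((1 - (1 / (t + L0 β τ t)) • Dmat β τ N t)⁻¹)

namespace PcAux

open Finset Set


noncomputable def bb (a : ℕ → ℝ) : ℕ → ℝ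
  | 0 => 1
  | (d+1) => ∑ m ∈ Finset.range (d+1), a (m+1) * bb a (d - m)
decreasing_by exact Nat.lt_succ_of_le (Nat.sub_le _ _)

lemma bb_zero (a : ℕ → ℝ) : bb a 0 = 1 := by simp [bb]

lemma bb_succ (a : ℕ → ℝ) (d : ℕ) :
    bb a (d+1) = ∑ m ∈ Finset.range (d+1), a (m+1) * bb a (d - m) := by
  rw [bb]

lemma bb_nonneg {a : ℕ → ℝ} (ha : ∀ m, 0 ≤ a m) : ∀ d, 0 ≤ bb a d := by
  intro d
  induction d using Nat.strong_induction_on with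
  | _ d ih =>
    cases d with
    | zero => simp [bb_zero]
    | succ d =>
      rw [bb_succ]
      exact Finset.sum_nonneg fun m _ =>
        mul_nonneg (ha _) (ih _ (Nat.lt_succ_of_le (Nat.sub_le _ _)))

noncomputable def Pf (a : ℕ → ℝ) (j : ℕ) : ℝ := ∑ d ∈ Finset.range j, bb a d

lemma Pf_zero (a : ℕ → ℝ) : Pf a 0 = 0 := by simp [Pf]

lemma Pf_succ (a : ℕ → ℝ) (j : ℕ) : Pf a (j+1) = Pf a j + bb a j := by
  simp [Pf, Finset.sum_range_succ]

lemma Pf_nonneg {a : ℕ → ℝ} (ha : ∀ m, 0 ≤ a m) (j : ℕ) : 0 ≤ Pf a j :=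
  Finset.sum_nonneg fun d _ => bb_nonneg ha d

lemma Pf_rec (a : ℕ → ℝ) (j : ℕ) :
    Pf a (j+1) = 1 + ∑ m ∈ Finset.range j, a (m+1) * Pf a (j - m) := by
  induction j with
  | zero => simp [Pf, bb_zero]
  | succ j ih =>
    rw [Pf_succ, ih, bb_succ, Finset.sum_range_succ, Finset.sum_range_succ (n := j)]
    have h1 : ∀ m ∈ Finset.range j,
        a (m+1) * Pf a (j - m) + a (m+1) * bb a (j - m) = a (m+1) * Pf a (j + 1 - m) := by
      intro m hm
      have hm' : m ≤ j := le_of_lt (Finset.mem_range.mp hm)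
      have : j + 1 - m = (j - m) + 1 := by omega
      rw [this, Pf_succ]; ring
    have h2 : ∑ m ∈ Finset.range j, a (m+1) * Pf a (j - m)
        + ∑ m ∈ Finset.range j, a (m+1) * bb a (j - m)
        = ∑ m ∈ Finset.range j, a (m+1) * Pf a (j + 1 - m) := by
      rw [← Finset.sum_add_distrib]
      exact Finset.sum_congr rfl h1
    have h3 : j + 1 - j = 1 := by omega
    have h4 : j - j = 0 := by omega
    rw [h3, h4, bb_zero]
    have h5 : Pf a 1 = 1 := by simp [Pf, bb_zero]
    rw [h5]
    linarith [h2]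

lemma Pf_upper {a : ℕ → ℝ} (ha : ∀ m, 0 ≤ a m) (K : ℕ)
    (hs : ∑ m ∈ Finset.range K, a (m+1) < 1) :
    ∀ j, j ≤ K + 1 → (1 - ∑ m ∈ Finset.range K, a (m+1)) * Pf a j ≤ 1 := by
  set S := ∑ m ∈ Finset.range K, a (m+1) with hS
  have hS0 : 0 ≤ S := Finset.sum_nonneg fun m _ => ha _
  have hS1 : 0 < 1 - S := by linarith
  intro j
  induction j using Nat.strong_induction_on with
  | _ j ih =>
    intro hj
    cases j with
    | zero => simp [Pf_zero]
    | succ j =>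
      rw [Pf_rec]
      have hsub : ∑ m ∈ Finset.range j, a (m+1) ≤ S := by
        apply Finset.sum_le_sum_of_subset_of_nonneg
        · exact Finset.range_subset_range.mpr (by omega)
        · intro i _ _; exact ha _
      have hterm : ∀ m ∈ Finset.range j, a (m+1) * Pf a (j - m) ≤ a (m+1) * (1 / (1 - S)) := by
        intro m hm
        apply mul_le_mul_of_nonneg_left _ (ha _)
        have := ih (j - m) (by omega) (by omega)
        rw [le_div_iff₀ hS1, mul_comm]
        exact this
      have hsum : ∑ m ∈ Finset.range j, a (m+1) * Pf a (j - m) ≤ S * (1 / (1 - S)) := by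
        calc ∑ m ∈ Finset.range j, a (m+1) * Pf a (j - m)
            ≤ ∑ m ∈ Finset.range j, a (m+1) * (1 / (1 - S)) := Finset.sum_le_sum hterm
          _ = (∑ m ∈ Finset.range j, a (m+1)) * (1 / (1 - S)) := by rw [Finset.sum_mul]
          _ ≤ S * (1 / (1 - S)) := by
              apply mul_le_mul_of_nonneg_right hsub
              positivity
      have : (1 - S) * (1 + S * (1 / (1 - S))) = 1 := by field_simp; ring
      nlinarith [hsum]

noncomputable def Tv (a : ℕ → ℝ) (j : ℕ) : ℝ :=
  (∑ m ∈ Finset.range j, ((j - m : ℕ) : ℝ) * a (m+1)) / ((j : ℝ) + 1)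

lemma Tv_nonneg {a : ℕ → ℝ} (ha : ∀ m, 0 ≤ a m) (j : ℕ) : 0 ≤ Tv a j := by
  apply div_nonneg _ (by positivity)
  exact Finset.sum_nonneg fun m _ => mul_nonneg (by positivity) (ha _)

lemma Tv_le {a : ℕ → ℝ} (ha : ∀ m, 0 ≤ a m) {K j : ℕ} (hj : j ≤ K) :
    Tv a j ≤ ∑ m ∈ Finset.range K, a (m+1) := by
  have h1 : Tv a j ≤ ∑ m ∈ Finset.range j, a (m+1) := by
    rw [Tv, div_le_iff₀ (by positivity)]
    rw [Finset.sum_mul]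
    apply Finset.sum_le_sum
    intro m hm
    have : ((j - m : ℕ) : ℝ) ≤ (j : ℝ) + 1 := by
      have : (j - m : ℕ) ≤ j + 1 := by omega
      exact_mod_cast this
    nlinarith [ha (m+1)]
  refine h1.trans ?_
  apply Finset.sum_le_sum_of_subset_of_nonneg (Finset.range_subset_range.mpr hj)
  intro i _ _; exact ha _

lemma Tv_mul (a : ℕ → ℝ) (j : ℕ) :
    ((j : ℝ) + 1) * Tv a j = ∑ m ∈ Finset.range j, ((j - m : ℕ) : ℝ) * a (m+1) := by
  rw [Tv, mul_div_cancel₀]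
  positivity

/-- Key cross-multiplied inequality. -/
lemma key_ineq {a : ℕ → ℝ} (ha : ∀ m, 0 ≤ a m) {K j m : ℕ}
    (hs : ∑ i ∈ Finset.range K, a (i+1) < 1) (hj : j ≤ K) (hm : m < j) :
    ((j - m : ℕ) : ℝ) * (1 - Tv a (j - 1 - m)) ≤ ((j : ℝ) + 1) * (1 - Tv a j) := by
  have hcast : ((j - m : ℕ) : ℝ) = ((j - 1 - m : ℕ) : ℝ) + 1 := by
    have : j - m = (j - 1 - m) + 1 := by omega
    rw [this]; push_cast
    ring
  set j' := j - 1 - m with hj'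
  have e1 : ((j - m : ℕ) : ℝ) * Tv a j' = ∑ i ∈ Finset.range j', ((j' - i : ℕ) : ℝ) * a (i+1) := by
    rw [hcast, ← Tv_mul a j']
  have e2 : ((j : ℝ) + 1) * Tv a j = ∑ i ∈ Finset.range j, ((j - i : ℕ) : ℝ) * a (i+1) :=
    Tv_mul a j
  -- extend e1's sum to range j
  have e3 : ∑ i ∈ Finset.range j', ((j' - i : ℕ) : ℝ) * a (i+1)
      = ∑ i ∈ Finset.range j, ((j' - i : ℕ) : ℝ) * a (i+1) := by
    apply Finset.sum_subset (Finset.range_subset_range.mpr (by omega))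
    intro i _ hi
    have : j' - i = 0 := by
      simp only [Finset.mem_range] at hi
      omega
    rw [this]; simp
  have hsle : ∑ i ∈ Finset.range j, a (i+1) ≤ 1 := by
    refine le_of_lt (lt_of_le_of_lt ?_ hs)
    apply Finset.sum_le_sum_of_subset_of_nonneg (Finset.range_subset_range.mpr hj)
    intro i _ _; exact ha _
  have hdiff : ∑ i ∈ Finset.range j, ((j - i : ℕ) : ℝ) * a (i+1)
      - ∑ i ∈ Finset.range j, ((j' - i : ℕ) : ℝ) * a (i+1)
      ≤ ((m : ℝ) + 1) := by
    rw [← Finset.sum_sub_distrib]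
    have hpt : ∀ i ∈ Finset.range j,
        ((j - i : ℕ) : ℝ) * a (i+1) - ((j' - i : ℕ) : ℝ) * a (i+1)
        ≤ ((m : ℝ) + 1) * a (i+1) := by
      intro i _
      have hn : (j - i : ℕ) ≤ (j' - i) + (m + 1) := by omega
      have hc : ((j - i : ℕ) : ℝ) ≤ ((j' - i : ℕ) : ℝ) + ((m : ℝ) + 1) := by
        have := (Nat.cast_le (α := ℝ)).mpr hn
        push_cast at this
        linarith
      nlinarith [ha (i+1)]
    calc ∑ i ∈ Finset.range j, (((j - i : ℕ) : ℝ) * a (i+1) - ((j' - i : ℕ) : ℝ) * a (i+1))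
        ≤ ∑ i ∈ Finset.range j, ((m : ℝ) + 1) * a (i+1) := Finset.sum_le_sum hpt
      _ = ((m : ℝ) + 1) * ∑ i ∈ Finset.range j, a (i+1) := by rw [Finset.mul_sum]
      _ ≤ ((m : ℝ) + 1) * 1 := by
          apply mul_le_mul_of_nonneg_left hsle (by positivity)
      _ = (m : ℝ) + 1 := by ring
  have hjm : ((j : ℝ) + 1) - ((j - m : ℕ) : ℝ) = (m : ℝ) + 1 := by
    have : ((j - m : ℕ) : ℝ) = (j : ℝ) - (m : ℝ) := by
      have hml : m ≤ j := le_of_lt hm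
      push_cast [Nat.cast_sub hml]
      ring
    rw [this]; ring
  have expand1 : ((j - m : ℕ) : ℝ) * (1 - Tv a j') = ((j - m : ℕ) : ℝ) - ((j - m : ℕ) : ℝ) * Tv a j' := by ring
  have expand2 : ((j : ℝ) + 1) * (1 - Tv a j) = ((j : ℝ) + 1) - ((j : ℝ) + 1) * Tv a j := by ring
  rw [expand1, expand2, e1, e2, e3]
  linarith [hdiff, hjm]

lemma Pf_lower {a : ℕ → ℝ} (ha : ∀ m, 0 ≤ a m) (K : ℕ)
    (hs : ∑ m ∈ Finset.range K, a (m+1) < 1) :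
    ∀ j, j ≤ K → 1 ≤ (1 - Tv a j) * Pf a (j+1) := by
  have hS0 : 0 ≤ ∑ m ∈ Finset.range K, a (m+1) := Finset.sum_nonneg fun m _ => ha _
  intro j
  induction j using Nat.strong_induction_on with
  | _ j ih =>
    intro hj
    have hTj : Tv a j < 1 := lt_of_le_of_lt (Tv_le ha hj) hs
    have hTj0 : 0 < 1 - Tv a j := by linarith
    rw [Pf_rec]
    -- per-term bound
    have hterm : ∀ m ∈ Finset.range j,
        ((j - m : ℕ) : ℝ) * a (m+1) / (((j : ℝ) + 1) * (1 - Tv a j)) ≤ a (m+1) * Pf a (j - m) := by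
      intro m hm
      have hmj : m < j := Finset.mem_range.mp hm
      have hj' : j - 1 - m < j := by omega
      have hIH := ih (j - 1 - m) hj' (by omega)
      have hT' : Tv a (j - 1 - m) < 1 := lt_of_le_of_lt (Tv_le ha (by omega : j - 1 - m ≤ K)) hs
      have hT'0 : 0 < 1 - Tv a (j - 1 - m) := by linarith
      have hrw : (j - 1 - m) + 1 = j - m := by omega
      rw [hrw] at hIH
      -- Pf a (j - m) ≥ 1 / (1 - Tv a (j-1-m))
      have hPf : 1 / (1 - Tv a (j - 1 - m)) ≤ Pf a (j - m) := by
        rw [div_le_iff₀ hT'0, mul_comm]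
        exact hIH
      have hkey := key_ineq ha hs hj hmj
      -- ((j-m):ℝ) / ((j+1)(1-Tv j)) ≤ 1 / (1 - Tv (j-1-m))
      have hfrac : ((j - m : ℕ) : ℝ) / (((j : ℝ) + 1) * (1 - Tv a j))
          ≤ 1 / (1 - Tv a (j - 1 - m)) := by
        rw [div_le_div_iff₀ (by positivity) hT'0]
        calc ((j - m : ℕ) : ℝ) * (1 - Tv a (j - 1 - m))
            ≤ ((j : ℝ) + 1) * (1 - Tv a j) := hkey
          _ = 1 * (((j : ℝ) + 1) * (1 - Tv a j)) := by ring
      have : ((j - m : ℕ) : ℝ) / (((j : ℝ) + 1) * (1 - Tv a j)) ≤ Pf a (j - m) :=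
        le_trans hfrac hPf
      calc ((j - m : ℕ) : ℝ) * a (m+1) / (((j : ℝ) + 1) * (1 - Tv a j))
          = a (m+1) * (((j - m : ℕ) : ℝ) / (((j : ℝ) + 1) * (1 - Tv a j))) := by ring
        _ ≤ a (m+1) * Pf a (j - m) := by
            apply mul_le_mul_of_nonneg_left this (ha _)
    have hsum : Tv a j / (1 - Tv a j) ≤ ∑ m ∈ Finset.range j, a (m+1) * Pf a (j - m) := by
      have h1 : ∑ m ∈ Finset.range j, ((j - m : ℕ) : ℝ) * a (m+1) / (((j : ℝ) + 1) * (1 - Tv a j))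
          ≤ ∑ m ∈ Finset.range j, a (m+1) * Pf a (j - m) := Finset.sum_le_sum hterm
      have h2 : ∑ m ∈ Finset.range j, ((j - m : ℕ) : ℝ) * a (m+1) / (((j : ℝ) + 1) * (1 - Tv a j))
          = (((j : ℝ) + 1) * Tv a j) / (((j : ℝ) + 1) * (1 - Tv a j)) := by
        rw [Tv_mul, Finset.sum_div]
      have h3 : (((j : ℝ) + 1) * Tv a j) / (((j : ℝ) + 1) * (1 - Tv a j)) = Tv a j / (1 - Tv a j) := by
        rw [mul_div_mul_left]
        positivity
      rw [h2, h3] at h1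
      exact h1
    have hfin : (1 - Tv a j) * (1 + Tv a j / (1 - Tv a j)) = 1 := by field_simp; ring
    nlinarith [hsum]

noncomputable def Amat (a : ℕ → ℝ) (N : ℕ) : Matrix (Fin N) (Fin N) ℝ :=
  Matrix.of fun i j => if (j : ℕ) < (i : ℕ) then a ((i : ℕ) - (j : ℕ)) else 0

noncomputable def Bmat (a : ℕ → ℝ) (N : ℕ) : Matrix (Fin N) (Fin N) ℝ :=
  Matrix.of fun i j => if (j : ℕ) ≤ (i : ℕ) then bb a ((i : ℕ) - (j : ℕ)) else 0

lemma bb_alt (a : ℕ → ℝ) (d : ℕ) :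
    bb a (d+1) = ∑ m ∈ Finset.range (d+1), a (d+1-m) * bb a m := by
  rw [bb_succ]
  rw [← Finset.sum_range_reflect (fun m => a (d+1-m) * bb a m) (d+1)]
  apply Finset.sum_congr rfl
  intro m hm
  have hm' : m < d + 1 := Finset.mem_range.mp hm
  have h1 : d + 1 - (d + 1 - 1 - m) = m + 1 := by omega
  have h2 : d + 1 - 1 - m = d - m := by omega
  rw [h1, h2]

lemma nat_helper (a : ℕ → ℝ) (i j N : ℕ) (hi : i < N) :
    ∑ l ∈ Finset.range N, (if j ≤ l ∧ l < i then a (i - l) * bb a (l - j) else 0)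
    = (if j ≤ i then bb a (i - j) else 0) - (if i = j then 1 else 0) := by
  rw [← Finset.sum_filter]
  have hfil : (Finset.range N).filter (fun l => j ≤ l ∧ l < i) = Finset.Ico j i := by
    ext l
    simp only [Finset.mem_filter, Finset.mem_range, Finset.mem_Ico]
    omega
  rw [hfil, Finset.sum_Ico_eq_sum_range]
  rcases lt_trichotomy i j with h | h | h
  · have h0 : i - j = 0 := by omega
    rw [h0]
    simp only [Finset.range_zero, Finset.sum_empty]
    rw [if_neg (by omega), if_neg (by omega)]
    ring
  · subst h
    simp [bb_zero]
  · obtain ⟨d, hd⟩ : ∃ d, i - j = d + 1 := ⟨i - j - 1, by omega⟩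
    rw [hd]
    have hcong : ∀ l ∈ Finset.range (d+1),
        a (i - (j + l)) * bb a (j + l - j) = a (d + 1 - l) * bb a l := by
      intro l hl
      have hl' : l < d + 1 := Finset.mem_range.mp hl
      have e1 : i - (j + l) = d + 1 - l := by omega
      have e2 : j + l - j = l := by omega
      rw [e1, e2]
    rw [Finset.sum_congr rfl hcong, ← bb_alt]
    rw [if_pos (by omega), if_neg (by omega)]
    ring

lemma mul_AB (a : ℕ → ℝ) (N : ℕ) : Amat a N * Bmat a N = Bmat a N - 1 := by
  ext i j
  rw [Matrix.mul_apply, Matrix.sub_apply, Matrix.one_apply]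
  have hentry : ∀ l : Fin N, Amat a N i l * Bmat a N l j
      = (fun l : ℕ => if (j : ℕ) ≤ l ∧ l < (i : ℕ) then a ((i:ℕ) - l) * bb a (l - (j:ℕ)) else 0)
        (l : ℕ) := by
    intro l
    simp only [Amat, Bmat, Matrix.of_apply]
    by_cases h1 : (l : ℕ) < (i : ℕ) <;> by_cases h2 : (j : ℕ) ≤ (l : ℕ) <;>
      simp [h1, h2]
  rw [Finset.sum_congr rfl (fun l _ => hentry l)]
  rw [Fin.sum_univ_eq_sum_range
    (fun l : ℕ => if (j : ℕ) ≤ l ∧ l < (i : ℕ) then a ((i:ℕ) - l) * bb a (l - (j:ℕ)) else 0) N]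
  rw [nat_helper a (i : ℕ) (j : ℕ) N i.isLt]
  have hij : (i = j) ↔ ((i : ℕ) = (j : ℕ)) := Fin.ext_iff
  simp only [Bmat, Matrix.of_apply]
  by_cases h : i = j
  · rw [if_pos h, if_pos (hij.mp h)]
  · rw [if_neg h, if_neg (fun hh => h (hij.mpr hh))]

lemma inv_eq (a : ℕ → ℝ) (N : ℕ) : (1 - Amat a N)⁻¹ = Bmat a N := by
  apply Matrix.inv_eq_right_inv
  rw [Matrix.sub_mul, Matrix.one_mul, mul_AB]
  abel

lemma colsum (a : ℕ → ℝ) (N : ℕ) (j : Fin N) :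
    ∑ i : Fin N, Bmat a N i j = Pf a (N - (j : ℕ)) := by
  have hentry : ∀ i : Fin N, Bmat a N i j
      = (fun i : ℕ => if (j : ℕ) ≤ i then bb a (i - (j:ℕ)) else 0) (i : ℕ) := by
    intro i; simp [Bmat]
  rw [Finset.sum_congr rfl (fun i _ => hentry i),
    Fin.sum_univ_eq_sum_range (fun i : ℕ => if (j : ℕ) ≤ i then bb a (i - (j:ℕ)) else 0) N]
  rw [← Finset.sum_filter]
  have hfil : (Finset.range N).filter (fun i => (j : ℕ) ≤ i) = Finset.Ico (j : ℕ) N := by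
    ext l
    simp only [Finset.mem_filter, Finset.mem_range, Finset.mem_Ico]
    omega
  rw [hfil, Finset.sum_Ico_eq_sum_range, Pf]
  apply Finset.sum_congr rfl
  intro l _
  congr 1
  omega


variable {β τ : ℝ}


-- integrand of L0 and of Li
lemma f0_nonneg (hτ : 0 < τ) {u : ℝ} (hu : 0 < u) : 0 ≤ τ * u / (u ^ β + τ) := by
  have h1 : 0 < u ^ β := Real.rpow_pos_of_pos hu β
  positivity

lemma fi_nonneg (hτ : 0 < τ) (i : ℕ) {u : ℝ} (hu : 0 < u) :
    0 ≤ τ ^ i * u ^ (β + 1) / (u ^ β + τ) ^ (i + 1) := by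
  have h1 : 0 < u ^ β := Real.rpow_pos_of_pos hu β
  have h2 : 0 < u ^ (β + 1) := Real.rpow_pos_of_pos hu _
  positivity

lemma geom_step (hτ : 0 < τ) {u : ℝ} (hu : 0 < u) (K : ℕ) :
    τ ^ (K + 1) * u ^ (β + 1) / (u ^ β + τ) ^ (K + 2)
      = (τ * u / (u ^ β + τ)) * ((τ / (u ^ β + τ)) ^ K * (u ^ β / (u ^ β + τ))) := by
  have h1 : 0 < u ^ β := Real.rpow_pos_of_pos hu β
  have hne : u ^ β + τ ≠ 0 := by positivity
  have hrpow : u ^ (β + 1) = u ^ β * u := by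
    rw [Real.rpow_add hu, Real.rpow_one]
  rw [hrpow, div_pow]
  field_simp
  ring

lemma geom_sum_eq (hτ : 0 < τ) {u : ℝ} (hu : 0 < u) (K : ℕ) :
    ∑ m ∈ Finset.range K, τ ^ (m + 1) * u ^ (β + 1) / (u ^ β + τ) ^ (m + 2)
      = (τ * u / (u ^ β + τ)) * (1 - (τ / (u ^ β + τ)) ^ K) := by
  have h1 : 0 < u ^ β := Real.rpow_pos_of_pos hu β
  have hne : u ^ β + τ ≠ 0 := by positivity
  induction K with
  | zero => simp
  | succ K ih =>
    rw [Finset.sum_range_succ, ih, geom_step hτ hu]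
    have hq : (τ / (u ^ β + τ)) ^ (K + 1) = (τ / (u ^ β + τ)) ^ K * (τ / (u ^ β + τ)) := by
      ring
    have huq : u ^ β / (u ^ β + τ) = 1 - τ / (u ^ β + τ) := by
      field_simp
      ring
    rw [hq, huq]
    ring

lemma geom_sum_le (hτ : 0 < τ) {u : ℝ} (hu : 0 < u) (K : ℕ) :
    ∑ m ∈ Finset.range K, τ ^ (m + 1) * u ^ (β + 1) / (u ^ β + τ) ^ (m + 2)
      ≤ τ * u / (u ^ β + τ) := by
  rw [geom_sum_eq hτ hu]
  have h1 : 0 < u ^ β := Real.rpow_pos_of_pos hu β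
  have hq0 : 0 ≤ τ / (u ^ β + τ) := by positivity
  have hq1 : τ / (u ^ β + τ) ≤ 1 := by
    rw [div_le_one (by positivity)]; linarith
  have hK : 0 ≤ (τ / (u ^ β + τ)) ^ K := by positivity
  have hK1 : (τ / (u ^ β + τ)) ^ K ≤ 1 := pow_le_one₀ hq0 hq1
  have h0 := f0_nonneg (β := β) hτ hu
  nlinarith

lemma fi_le_f0 (hτ : 0 < τ) (m : ℕ) {u : ℝ} (hu : 0 < u) :
    τ ^ (m + 1) * u ^ (β + 1) / (u ^ β + τ) ^ (m + 2) ≤ τ * u / (u ^ β + τ) := by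
  refine le_trans ?_ (geom_sum_le hτ hu (m + 1))
  have := Finset.single_le_sum (f := fun k => τ ^ (k + 1) * u ^ (β + 1) / (u ^ β + τ) ^ (k + 2))
    (fun k _ => fi_nonneg hτ (k+1) hu) (Finset.self_mem_range_succ m)
  simpa using this

lemma cont_fi (hτ : 0 < τ) (i : ℕ) :
    ContinuousOn (fun u : ℝ => τ ^ i * u ^ (β + 1) / (u ^ β + τ) ^ (i + 1)) (Set.Ioi 0) := by
  apply ContinuousOn.div
  · exact continuousOn_const.mul
      (ContinuousOn.rpow_const continuousOn_id (fun x hx => Or.inl (ne_of_gt hx)))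
  · exact ((ContinuousOn.rpow_const continuousOn_id
      (fun x hx => Or.inl (ne_of_gt hx))).add continuousOn_const).pow _
  · intro x hx
    have h1 : 0 < x ^ β := Real.rpow_pos_of_pos hx β
    positivity

lemma cont_f0 (hτ : 0 < τ) :
    ContinuousOn (fun u : ℝ => τ * u / (u ^ β + τ)) (Set.Ioi 0) := by
  apply ContinuousOn.div
  · exact continuousOn_const.mul continuousOn_id
  · exact (ContinuousOn.rpow_const continuousOn_id
      (fun x hx => Or.inl (ne_of_gt hx))).add continuousOn_const
  · intro x hx
    have h1 : 0 < x ^ β := Real.rpow_pos_of_pos hx β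
    positivity

lemma int_f0_Ioi0 (hβ : 2 < β) (hτ : 0 < τ) :
    IntegrableOn (fun u : ℝ => τ * u / (u ^ β + τ)) (Set.Ioi 0) := by
  have hsplit : Set.Ioc (0:ℝ) 1 ∪ Set.Ioi 1 = Set.Ioi 0 :=
    Set.Ioc_union_Ioi_eq_Ioi zero_le_one
  rw [← hsplit]
  apply IntegrableOn.union
  · -- bounded on Ioc 0 1
    apply Measure.integrableOn_of_bounded (M := 1)
    · exact (measure_Ioc_lt_top).ne
    · have hm : Measurable (fun u : ℝ => τ * u / (u ^ β + τ)) := by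
        fun_prop
      exact hm.aestronglyMeasurable
    · apply (ae_restrict_iff' measurableSet_Ioc).mpr
      apply ae_of_all
      intro u hu
      have hu0 : 0 < u := hu.1
      have h1 : 0 < u ^ β := Real.rpow_pos_of_pos hu0 β
      rw [Real.norm_eq_abs, abs_of_nonneg (f0_nonneg hτ hu0)]
      have : τ * u / (u ^ β + τ) ≤ τ * u / τ := by
        apply div_le_div_of_nonneg_left (by positivity) hτ (by linarith)
      have h2 : τ * u / τ = u := by field_simp
      rw [h2] at this
      linarith [hu.2]
  · -- dominated by τ * u ^ (1 - β) on Ioi 1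
    have hint : Integrable (fun u : ℝ => τ * u ^ (1 - β)) (volume.restrict (Set.Ioi 1)) :=
      (integrableOn_Ioi_rpow_of_lt (by linarith) one_pos).const_mul τ
    apply Integrable.mono hint
    · exact ((cont_f0 hτ).mono (fun x (hx : x ∈ Set.Ioi (1:ℝ)) => Set.mem_Ioi.mpr (lt_trans one_pos hx))).aestronglyMeasurable
        measurableSet_Ioi
    · apply (ae_restrict_iff' measurableSet_Ioi).mpr
      apply ae_of_all
      intro u hu
      have hu1 : (1:ℝ) < u := hu
      have hu0 : 0 < u := lt_trans one_pos hu1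
      have h1 : 0 < u ^ β := Real.rpow_pos_of_pos hu0 β
      rw [Real.norm_eq_abs, Real.norm_eq_abs, abs_of_nonneg (f0_nonneg hτ hu0),
        abs_of_nonneg (by positivity : (0:ℝ) ≤ τ * u ^ (1 - β))]
      have hpow : u ^ (1 - β) = u / u ^ β := by
        rw [Real.rpow_sub hu0, Real.rpow_one]
      rw [hpow, mul_div_assoc]
      apply mul_le_mul_of_nonneg_left _ hτ.le
      exact div_le_div_of_nonneg_left hu0.le h1 (by linarith)

lemma int_f0_Ioi1 (hβ : 2 < β) (hτ : 0 < τ) :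
    IntegrableOn (fun u : ℝ => τ * u / (u ^ β + τ)) (Set.Ioi 1) :=
  (int_f0_Ioi0 hβ hτ).mono_set (Set.Ioi_subset_Ioi zero_le_one)

lemma int_fi (hβ : 2 < β) (hτ : 0 < τ) (m : ℕ) {s : ℝ} (hs : 0 ≤ s) :
    IntegrableOn (fun u : ℝ => τ ^ (m+1) * u ^ (β + 1) / (u ^ β + τ) ^ (m + 2))
      (Set.Ioi s) := by
  have hsub : Set.Ioi s ⊆ Set.Ioi 0 := Set.Ioi_subset_Ioi hs
  apply Integrable.mono ((int_f0_Ioi0 hβ hτ).mono_set hsub)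
  · exact ((cont_fi hτ (m+1)).mono hsub).aestronglyMeasurable measurableSet_Ioi
  · apply (ae_restrict_iff' measurableSet_Ioi).mpr
    apply ae_of_all
    intro u hu
    have hu0 : 0 < u := lt_of_le_of_lt hs hu
    rw [Real.norm_eq_abs, Real.norm_eq_abs, abs_of_nonneg (fi_nonneg hτ (m+1) hu0),
      abs_of_nonneg (f0_nonneg hτ hu0)]
    exact fi_le_f0 hτ m hu0

lemma Li_nonneg (hτ : 0 < τ) {t : ℝ} (ht : t ∈ Set.Ioc (0:ℝ) 1) (i : ℕ) :
    0 ≤ Li β τ i t := by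
  have h1 : 0 ≤ ∫ u in Set.Ioi (1:ℝ), τ ^ i * u ^ (β + 1) / (u ^ β + τ) ^ (i + 1) := by
    apply setIntegral_nonneg measurableSet_Ioi
    intro u hu
    exact fi_nonneg hτ i (lt_trans one_pos hu)
  have h0 : 0 ≤ ∫ u in Set.Ioi (0:ℝ), τ ^ i * u ^ (β + 1) / (u ^ β + τ) ^ (i + 1) := by
    apply setIntegral_nonneg measurableSet_Ioi
    intro u hu
    exact fi_nonneg hτ i hu
  have ht1 : 0 < t := ht.1
  have ht2 : t ≤ 1 := ht.2
  apply add_nonneg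
  · positivity
  · have : (0:ℝ) ≤ 1 - t := by linarith
    positivity

lemma L0_nonneg (hτ : 0 < τ) {t : ℝ} (ht : t ∈ Set.Ioc (0:ℝ) 1) :
    0 ≤ L0 β τ t := by
  have h1 : 0 ≤ ∫ u in Set.Ioi (1:ℝ), τ * u / (u ^ β + τ) := by
    apply setIntegral_nonneg measurableSet_Ioi
    intro u hu
    exact f0_nonneg hτ (lt_trans one_pos hu)
  have h0 : 0 ≤ ∫ u in Set.Ioi (0:ℝ), τ * u / (u ^ β + τ) := by
    apply setIntegral_nonneg measurableSet_Ioi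
    intro u hu
    exact f0_nonneg hτ hu
  have ht1 : 0 < t := ht.1
  have ht2 : t ≤ 1 := ht.2
  apply add_nonneg
  · positivity
  · have : (0:ℝ) ≤ 1 - t := by linarith
    positivity

lemma sum_int_le (hβ : 2 < β) (hτ : 0 < τ) (n : ℕ) {s : ℝ} (hs : 0 ≤ s) :
    ∑ m ∈ Finset.range n, ∫ u in Set.Ioi s, τ ^ (m+1) * u ^ (β + 1) / (u ^ β + τ) ^ (m + 2)
      ≤ ∫ u in Set.Ioi s, τ * u / (u ^ β + τ) := by
  rw [← MeasureTheory.integral_finset_sum (Finset.range n) (fun m _ => int_fi hβ hτ m hs)]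
  apply setIntegral_mono_on
  · exact MeasureTheory.integrable_finset_sum _ (fun m _ => int_fi hβ hτ m hs)
  · exact (int_f0_Ioi0 hβ hτ).mono_set (Set.Ioi_subset_Ioi hs)
  · exact measurableSet_Ioi
  · intro u hu
    exact geom_sum_le hτ (lt_of_le_of_lt hs hu) n

lemma sum_Li_le_L0 (hβ : 2 < β) (hτ : 0 < τ) {t : ℝ} (ht : t ∈ Set.Ioc (0:ℝ) 1) (n : ℕ) :
    ∑ m ∈ Finset.range n, Li β τ (m+1) t ≤ L0 β τ t := by
  have ht1 : 0 < t := ht.1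
  have ht2 : t ≤ 1 := ht.2
  have key : ∀ m : ℕ, Li β τ (m+1) t
      = 2 * t * (∫ u in Set.Ioi (1:ℝ), τ ^ (m+1) * u ^ (β + 1) / (u ^ β + τ) ^ (m + 2)) +
        2 * (1 - t) * (∫ u in Set.Ioi (0:ℝ), τ ^ (m+1) * u ^ (β + 1) / (u ^ β + τ) ^ (m + 2)) := by
    intro m; rfl
  calc ∑ m ∈ Finset.range n, Li β τ (m+1) t
      = 2 * t * (∑ m ∈ Finset.range n,
          ∫ u in Set.Ioi (1:ℝ), τ ^ (m+1) * u ^ (β + 1) / (u ^ β + τ) ^ (m + 2)) +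
        2 * (1 - t) * (∑ m ∈ Finset.range n,
          ∫ u in Set.Ioi (0:ℝ), τ ^ (m+1) * u ^ (β + 1) / (u ^ β + τ) ^ (m + 2)) := by
        rw [Finset.mul_sum, Finset.mul_sum, ← Finset.sum_add_distrib]
        exact Finset.sum_congr rfl (fun m _ => key m)
    _ ≤ 2 * t * (∫ u in Set.Ioi (1:ℝ), τ * u / (u ^ β + τ)) +
        2 * (1 - t) * (∫ u in Set.Ioi (0:ℝ), τ * u / (u ^ β + τ)) := by
        apply add_le_add
        · exact mul_le_mul_of_nonneg_left (sum_int_le hβ hτ n zero_le_one) (by linarith)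
        · exact mul_le_mul_of_nonneg_left (sum_int_le hβ hτ n le_rfl) (by linarith)
    _ = L0 β τ t := rfl


end PcAux

/-- **Property 1 of the paper's Lemma 3**: for `t ∈ (0,1]`, setting
`s₁ = (1/(t+L_0(t)))·∑_{i=1}^{N−1} L_i(t)` and
`s₂ = (1/(t+L_0(t)))·∑_{i=1}^{N−1} ((N−i)/N)·L_i(t)`, one has `0 ≤ s₂ ≤ s₁ < 1` and
`(t/(t+L_0(t)))·(1/(1−s₂)) ≤ P_c(t) ≤ (t/(t+L_0(t)))·(1/(1−s₁))`. -/
theorem Pc_two_sided_fractional_bounds (β τ : ℝ) (hβ : 2 < β) (hτ : 0 < τ)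
    (N : ℕ) (hN : 1 ≤ N) (t : ℝ) (ht : t ∈ Set.Ioc (0 : ℝ) 1) :
    0 ≤ (1 / (t + L0 β τ t)) * ∑ i ∈ Finset.Icc 1 (N - 1), (((N - i : ℕ) : ℝ) / (N : ℝ)) * Li β τ i t ∧
    (1 / (t + L0 β τ t)) * ∑ i ∈ Finset.Icc 1 (N - 1), (((N - i : ℕ) : ℝ) / (N : ℝ)) * Li β τ i t ≤
      (1 / (t + L0 β τ t)) * ∑ i ∈ Finset.Icc 1 (N - 1), Li β τ i t ∧
    (1 / (t + L0 β τ t)) * ∑ i ∈ Finset.Icc 1 (N - 1), Li β τ i t < 1 ∧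
    (t / (t + L0 β τ t)) *
        (1 / (1 - (1 / (t + L0 β τ t)) *
          ∑ i ∈ Finset.Icc 1 (N - 1), (((N - i : ℕ) : ℝ) / (N : ℝ)) * Li β τ i t)) ≤
      Pc β τ N t ∧
    Pc β τ N t ≤
      (t / (t + L0 β τ t)) *
        (1 / (1 - (1 / (t + L0 β τ t)) * ∑ i ∈ Finset.Icc 1 (N - 1), Li β τ i t)) := by
  obtain ⟨ht0, ht1⟩ := ht
  have hL0 : 0 ≤ L0 β τ t := PcAux.L0_nonneg hτ ⟨ht0, ht1⟩
  have hden : 0 < t + L0 β τ t := by linarith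
  set c : ℝ := 1 / (t + L0 β τ t) with hc_def
  have hc : 0 < c := by positivity
  set a : ℕ → ℝ := fun m => c * Li β τ m t with ha_def
  have ha : ∀ m, 0 ≤ a m := fun m => mul_nonneg hc.le (PcAux.Li_nonneg hτ ⟨ht0, ht1⟩ m)
  haveI : Nonempty (Fin N) := ⟨⟨0, by omega⟩⟩
  have hconv : ∀ g : ℕ → ℝ,
      ∑ i ∈ Finset.Icc 1 (N-1), g i = ∑ m ∈ Finset.range (N-1), g (m+1) := by
    intro g
    have h1 : Finset.Icc 1 (N-1) = Finset.Ico 1 N := by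
      rw [← Finset.Ico_add_one_right_eq_Icc]
      congr 1
      omega
    rw [h1, Finset.sum_Ico_eq_sum_range]
    have h2 : N - 1 = N - 1 := rfl
    apply Finset.sum_congr rfl
    intro m _
    congr 1
    omega
  have hS0 : 0 ≤ ∑ m ∈ Finset.range (N-1), a (m+1) :=
    Finset.sum_nonneg fun m _ => ha _
  have hs1eq : c * ∑ i ∈ Finset.Icc 1 (N-1), Li β τ i t
      = ∑ m ∈ Finset.range (N-1), a (m+1) := by
    rw [hconv (fun i => Li β τ i t), Finset.mul_sum]
  have hS_lt : ∑ m ∈ Finset.range (N-1), a (m+1) < 1 := by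
    rw [← hs1eq, hconv (fun i => Li β τ i t)]
    have h2 : ∑ m ∈ Finset.range (N-1), Li β τ (m+1) t ≤ L0 β τ t :=
      PcAux.sum_Li_le_L0 hβ hτ ⟨ht0, ht1⟩ (N-1)
    have h4 : c * (t + L0 β τ t) = 1 := by
      rw [hc_def]; field_simp
    calc c * ∑ m ∈ Finset.range (N-1), Li β τ (m+1) t
        ≤ c * L0 β τ t := mul_le_mul_of_nonneg_left h2 hc.le
      _ < c * (t + L0 β τ t) := by
          apply mul_lt_mul_of_pos_left _ hc
          linarith
      _ = 1 := h4
  have hSpos : 0 < 1 - ∑ m ∈ Finset.range (N-1), a (m+1) := by linarith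
  have hNR : (0:ℝ) < (N:ℝ) := by
    have : (1:ℕ) ≤ N := hN
    exact_mod_cast Nat.pos_of_ne_zero (by omega)
  have hs2eq : c * ∑ i ∈ Finset.Icc 1 (N-1), (((N - i : ℕ) : ℝ) / (N : ℝ)) * Li β τ i t
      = PcAux.Tv a (N-1) := by
    rw [hconv (fun i => (((N - i : ℕ) : ℝ) / (N : ℝ)) * Li β τ i t), PcAux.Tv]
    have hden2 : ((N - 1 : ℕ) : ℝ) + 1 = (N : ℝ) := by
      have h5 : ((N - 1 : ℕ) : ℝ) = (N : ℝ) - 1 := by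
        have := Nat.cast_sub (R := ℝ) hN
        simpa using this
      rw [h5]; ring
    rw [hden2, Finset.mul_sum, Finset.sum_div]
    apply Finset.sum_congr rfl
    intro m _
    have h6 : N - (m+1) = N - 1 - m := by omega
    rw [h6, ha_def]
    ring
  -- matrix part
  have hDA : (1 : Matrix (Fin N) (Fin N) ℝ) - c • Dmat β τ N t
      = 1 - PcAux.Amat a N := by
    congr 1
    ext i j
    simp only [Matrix.smul_apply, Dmat, PcAux.Amat, Matrix.of_apply, smul_eq_mul,
      mul_ite, mul_zero, ha_def]
  have hinvB : (1 - c • Dmat β τ N t)⁻¹ = PcAux.Bmat a N := by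
    rw [hDA, PcAux.inv_eq]
  have hnorm : matNorm1 ((1 - c • Dmat β τ N t)⁻¹)
      = ⨆ j : Fin N, PcAux.Pf a (N - (j:ℕ)) := by
    rw [hinvB, matNorm1]
    apply iSup_congr
    intro j
    rw [← PcAux.colsum a N j]
    apply Finset.sum_congr rfl
    intro i _
    apply abs_of_nonneg
    by_cases h : (j:ℕ) ≤ (i:ℕ)
    · simp only [PcAux.Bmat, Matrix.of_apply, if_pos h]
      exact PcAux.bb_nonneg ha _
    · simp only [PcAux.Bmat, Matrix.of_apply, if_neg h]
      exact le_rfl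
  have hup : ∀ j : Fin N, PcAux.Pf a (N - (j:ℕ))
      ≤ 1 / (1 - ∑ m ∈ Finset.range (N-1), a (m+1)) := by
    intro j
    have h7 := PcAux.Pf_upper ha (N-1) hS_lt (N - (j:ℕ)) (by omega)
    rw [le_div_iff₀ hSpos, mul_comm]
    exact h7
  have hnorm_up : matNorm1 ((1 - c • Dmat β τ N t)⁻¹)
      ≤ 1 / (1 - ∑ m ∈ Finset.range (N-1), a (m+1)) := by
    rw [hnorm]
    exact ciSup_le hup
  have hT0 : 0 ≤ PcAux.Tv a (N-1) := PcAux.Tv_nonneg ha _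
  have hT1 : PcAux.Tv a (N-1) ≤ ∑ m ∈ Finset.range (N-1), a (m+1) :=
    PcAux.Tv_le ha le_rfl
  have hTlt : 0 < 1 - PcAux.Tv a (N-1) := by linarith
  have hPfN : 1 / (1 - PcAux.Tv a (N-1)) ≤ PcAux.Pf a N := by
    have hlow := PcAux.Pf_lower ha (N-1) hS_lt (N-1) le_rfl
    have h8 : (N-1)+1 = N := by omega
    rw [h8] at hlow
    rw [div_le_iff₀ hTlt, mul_comm]
    linarith
  have hnorm_lo : 1 / (1 - PcAux.Tv a (N-1)) ≤ matNorm1 ((1 - c • Dmat β τ N t)⁻¹) := by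
    rw [hnorm]
    refine le_trans ?_ (le_ciSup (Set.Finite.bddAbove (Set.finite_range
      (fun j : Fin N => PcAux.Pf a (N - (j:ℕ))))) (⟨0, by omega⟩ : Fin N))
    simpa using hPfN
  have htdiv : 0 ≤ t / (t + L0 β τ t) := div_nonneg ht0.le hden.le
  have hPc : Pc β τ N t = (t / (t + L0 β τ t)) * matNorm1 ((1 - c • Dmat β τ N t)⁻¹) := by
    rw [Pc]
  refine ⟨?_, ?_, ?_, ?_, ?_⟩
  · rw [hs2eq]
    exact hT0
  · apply mul_le_mul_of_nonneg_left _ (by positivity : (0:ℝ) ≤ 1 / (t + L0 β τ t))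
    apply Finset.sum_le_sum
    intro i _
    have hLi : 0 ≤ Li β τ i t := PcAux.Li_nonneg hτ ⟨ht0, ht1⟩ i
    have hfrac : ((N - i : ℕ) : ℝ) / (N : ℝ) ≤ 1 := by
      rw [div_le_one hNR]
      exact_mod_cast Nat.sub_le N i
    exact mul_le_of_le_one_left hLi hfrac
  · rw [hs1eq]
    exact hS_lt
  · rw [hs2eq, hPc]
    exact mul_le_mul_of_nonneg_left hnorm_lo htdiv
  · rw [hs1eq, hPc]
    exact mul_le_mul_of_nonneg_left hnorm_up htdiv
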